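/- arXiv:2108.11209 — 2 statements merged into one kernel-verified Lean document; each statement's English description precedes it below -/
import Mathlib

section
/- Let α : [0, T] → ℝ be a nonnegative differentiable function, let V : [0, T] → ℝ be continuous, and suppose |α'(s)| ≤ C (|V(s)| + 1) α(s) for all s and some C > 0. If moreover |V(s)| ≤ |V(t)| + M |s - t| for a constant M ≥ 0 and a fixed t ∈ [0, T], then for all s ∈ [0, T], α(t) · exp(-C[(|V(t)| + 1)|s - t| + M (s - t)²]) ≤ α(s) ≤ α(t) · exp(C[(|V(t)| + 1)|s - t| + M (s - t)²]). -/
private lemma gronwall_aux (a b P Q : ℝ)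
    (f : ℝ → ℝ)
    (hf0 : ∀ u ∈ Set.Icc a b, 0 ≤ f u)
    (hfd : ∀ u ∈ Set.Icc a b, DifferentiableAt ℝ f u)
    (hfb : ∀ u ∈ Set.Icc a b, |deriv f u| ≤ (P + Q * (u - a)) * f u) :
    ∀ s ∈ Set.Icc a b,
      f a * Real.exp (-(P * (s - a) + Q * (s - a) ^ 2 / 2)) ≤ f s ∧
      f s ≤ f a * Real.exp (P * (s - a) + Q * (s - a) ^ 2 / 2) := by
  set φ : ℝ → ℝ := fun u => P * (u - a) + Q * (u - a) ^ 2 / 2 with hφdef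
  have hφ : ∀ u : ℝ, HasDerivAt φ (P + Q * (u - a)) u := by
    intro u
    have h1 : HasDerivAt (fun u : ℝ => u - a) 1 u := (hasDerivAt_id u).sub_const a
    have h2 : HasDerivAt (fun u : ℝ => P * (u - a)) P u := by
      simpa using h1.const_mul P
    have h3 : HasDerivAt (fun u : ℝ => (u - a) ^ 2) (2 * (u - a)) u := by
      simpa using h1.fun_pow 2
    have h4 : HasDerivAt (fun u : ℝ => Q * (u - a) ^ 2 / 2) (Q * (u - a)) u := by
      have := (h3.const_mul Q).div_const 2
      rw [show Q * (u - a) = Q * (2 * (u - a)) / 2 by ring]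
      exact this
    exact h2.add h4
  intro s hs
  have hab : a ≤ b := le_trans hs.1 hs.2
  have haI : a ∈ Set.Icc a b := ⟨le_refl a, hab⟩
  have hφa : φ a = 0 := by simp [hφdef]
  -- upper bound
  constructor
  · -- lower bound: g(u) = f u * exp (φ u) is monotone
    set g : ℝ → ℝ := fun u => f u * Real.exp (φ u) with hgdef
    have hgd : ∀ u ∈ Set.Icc a b,
        HasDerivAt g (deriv f u * Real.exp (φ u) +
          f u * (Real.exp (φ u) * (P + Q * (u - a)))) u := by
      intro u hu
      exact ((hfd u hu).hasDerivAt).mul ((hφ u).exp)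
    have hmono : MonotoneOn g (Set.Icc a b) := by
      apply monotoneOn_of_deriv_nonneg (convex_Icc a b)
      · exact ContinuousOn.mul
          (fun u hu => ((hfd u hu).continuousAt).continuousWithinAt)
          (Real.continuous_exp.comp (by fun_prop)).continuousOn
      · intro u hu
        rw [interior_Icc] at hu
        exact ((hgd u ⟨le_of_lt hu.1, le_of_lt hu.2⟩).differentiableAt).differentiableWithinAt
      · intro u hu
        rw [interior_Icc] at hu
        have huI : u ∈ Set.Icc a b := ⟨le_of_lt hu.1, le_of_lt hu.2⟩
        rw [(hgd u huI).deriv]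
        have hb := hfb u huI
        have h1 : -((P + Q * (u - a)) * f u) ≤ deriv f u :=
          neg_le_of_abs_le hb |>.trans_eq' (by ring_nf)
        nlinarith [Real.exp_pos (φ u), neg_abs_le (deriv f u), abs_nonneg (deriv f u)]
    have := hmono haI hs hs.1
    have hga : g a = f a := by simp [hgdef, hφa]
    rw [hga] at this
    -- this : f a ≤ f s * exp (φ s)
    have hexp := Real.exp_pos (φ s)
    simp only [hgdef] at this
    rw [Real.exp_neg, mul_inv_le_iff₀ hexp]
    linarith [this]
  · set g : ℝ → ℝ := fun u => f u * Real.exp (-(φ u)) with hgdef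
    have hgd : ∀ u ∈ Set.Icc a b,
        HasDerivAt g (deriv f u * Real.exp (-(φ u)) +
          f u * (Real.exp (-(φ u)) * (-(P + Q * (u - a))))) u := by
      intro u hu
      exact ((hfd u hu).hasDerivAt).mul ((hφ u).neg.exp)
    have hanti : AntitoneOn g (Set.Icc a b) := by
      apply antitoneOn_of_deriv_nonpos (convex_Icc a b)
      · exact ContinuousOn.mul
          (fun u hu => ((hfd u hu).continuousAt).continuousWithinAt)
          (Real.continuous_exp.comp (by fun_prop)).continuousOn
      · intro u hu
        rw [interior_Icc] at hu
        exact ((hgd u ⟨le_of_lt hu.1, le_of_lt hu.2⟩).differentiableAt).differentiableWithinAt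
      · intro u hu
        rw [interior_Icc] at hu
        have huI : u ∈ Set.Icc a b := ⟨le_of_lt hu.1, le_of_lt hu.2⟩
        rw [(hgd u huI).deriv]
        have hb := hfb u huI
        nlinarith [Real.exp_pos (-(φ u)), le_abs_self (deriv f u)]
    have := hanti haI hs hs.1
    have hga : g a = f a := by simp [hgdef, hφa]
    rw [hga] at this
    -- this : f s * exp (-(φ s)) ≤ f a
    have hexp := Real.exp_pos (φ s)
    calc f s = f s * Real.exp (-(φ s)) * Real.exp (φ s) := by
            rw [mul_assoc, ← Real.exp_add]; simp
      _ ≤ f a * Real.exp (φ s) := by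
            apply mul_le_mul_of_nonneg_right this (le_of_lt hexp)

theorem gronwall_velocity_lemma
    (T C M : ℝ) (hT : 0 < T) (hC : 0 < C) (hM : 0 ≤ M)
    (α V : ℝ → ℝ)
    (hα_nonneg : ∀ s ∈ Set.Icc (0:ℝ) T, 0 ≤ α s)
    (hα_diff : ∀ s ∈ Set.Icc (0:ℝ) T, DifferentiableAt ℝ α s)
    (hV_cont : ContinuousOn V (Set.Icc 0 T))
    (hα_bound : ∀ s ∈ Set.Icc (0:ℝ) T, |deriv α s| ≤ C * (|V s| + 1) * α s)
    (t : ℝ) (ht : t ∈ Set.Icc (0:ℝ) T)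
    (hV_growth : ∀ s ∈ Set.Icc (0:ℝ) T, |V s| ≤ |V t| + M * |s - t|) :
    ∀ s ∈ Set.Icc (0:ℝ) T,
      α t * Real.exp (-(C * ((|V t| + 1) * |s - t| + M * (s - t)^2))) ≤ α s ∧
      α s ≤ α t * Real.exp (C * ((|V t| + 1) * |s - t| + M * (s - t)^2)) := by
  intro s hs
  have hVt1 : (0:ℝ) ≤ |V t| + 1 := by positivity
  rcases le_total t s with hts | hst
  · -- forward case: apply aux on [t, T]
    have key := gronwall_aux t T (C * (|V t| + 1)) (C * M) α
      (fun u hu => hα_nonneg u ⟨le_trans ht.1 hu.1, hu.2⟩)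
      (fun u hu => hα_diff u ⟨le_trans ht.1 hu.1, hu.2⟩)
      (fun u hu => by
        have huI : u ∈ Set.Icc (0:ℝ) T := ⟨le_trans ht.1 hu.1, hu.2⟩
        refine (hα_bound u huI).trans ?_
        have hV := hV_growth u huI
        rw [abs_of_nonneg (by linarith [hu.1] : (0:ℝ) ≤ u - t)] at hV
        have hαu := hα_nonneg u huI
        nlinarith [mul_le_mul_of_nonneg_right (mul_le_mul_of_nonneg_left
          (by linarith : |V u| + 1 ≤ |V t| + 1 + M * (u - t)) hC.le) hαu])
      s ⟨hts, hs.2⟩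
    have habs : |s - t| = s - t := abs_of_nonneg (by linarith)
    have hαt : 0 ≤ α t := hα_nonneg t ht
    have hexp1 : C * (|V t| + 1) * (s - t) + C * M * (s - t) ^ 2 / 2 ≤
        C * ((|V t| + 1) * |s - t| + M * (s - t) ^ 2) := by
      rw [habs]; nlinarith [mul_nonneg (mul_nonneg hC.le hM) (sq_nonneg (s - t))]
    constructor
    · refine le_trans ?_ key.1
      apply mul_le_mul_of_nonneg_left (Real.exp_le_exp.mpr (by linarith)) hαt
    · refine key.2.trans ?_
      apply mul_le_mul_of_nonneg_left (Real.exp_le_exp.mpr hexp1) hαt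
  · -- backward case: reflect around t
    have hmem : ∀ u ∈ Set.Icc t (2 * t - s), 2 * t - u ∈ Set.Icc (0:ℝ) T := by
      intro u hu
      constructor
      · have : 2 * t - u ≥ s := by linarith [hu.2]
        linarith [hs.1]
      · linarith [hu.1, ht.2]
    have hg_deriv : ∀ u : ℝ, DifferentiableAt ℝ α (2 * t - u) →
        HasDerivAt (fun u => α (2 * t - u)) (deriv α (2 * t - u) * (-1)) u := by
      intro u hd
      have hlin : HasDerivAt (fun u : ℝ => 2 * t - u) (-1) u := by
        simpa using (hasDerivAt_id u).const_sub (2 * t)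
      exact hd.hasDerivAt.comp u hlin
    have key := gronwall_aux t (2 * t - s) (C * (|V t| + 1)) (C * M)
      (fun u => α (2 * t - u))
      (fun u hu => hα_nonneg _ (hmem u hu))
      (fun u hu => (hg_deriv u (hα_diff _ (hmem u hu))).differentiableAt)
      (fun u hu => by
        have huI := hmem u hu
        rw [(hg_deriv u (hα_diff _ huI)).deriv]
        rw [abs_mul, abs_neg, abs_one, mul_one]
        refine (hα_bound _ huI).trans ?_
        have hV := hV_growth _ huI
        have habs : |2 * t - u - t| = u - t := by
          have : 2 * t - u - t = -(u - t) := by ring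
          rw [this, abs_neg, abs_of_nonneg (by linarith [hu.1])]
        rw [habs] at hV
        have hαu := hα_nonneg _ huI
        have hint := mul_le_mul_of_nonneg_right (mul_le_mul_of_nonneg_left
          (by linarith : |V (2 * t - u)| + 1 ≤ |V t| + 1 + M * (u - t)) hC.le) hαu
        nlinarith [hint])
      (2 * t - s) ⟨by linarith, le_refl _⟩
    simp only [show 2 * t - (2 * t - s) = s by ring, show 2 * t - t = t by ring] at key
    have habs : |s - t| = (2 * t - s) - t := by
      rw [abs_of_nonpos (by linarith)]; ring
    have hαt : 0 ≤ α t := hα_nonneg t ht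
    have hsq : (s - t) ^ 2 = ((2 * t - s) - t) ^ 2 := by ring
    have hexp1 : C * (|V t| + 1) * ((2 * t - s) - t) + C * M * ((2 * t - s) - t) ^ 2 / 2 ≤
        C * ((|V t| + 1) * |s - t| + M * (s - t) ^ 2) := by
      rw [habs, hsq]
      nlinarith [mul_nonneg (mul_nonneg hC.le hM) (sq_nonneg ((2 * t - s) - t))]
    constructor
    · refine le_trans ?_ key.1
      apply mul_le_mul_of_nonneg_left (Real.exp_le_exp.mpr (by linarith)) hαt
    · refine key.2.trans ?_
      apply mul_le_mul_of_nonneg_left (Real.exp_le_exp.mpr hexp1) hαt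
end

section
/- Let s₁ < s₀, let X : [s₁, s₀] → ℝ^d and V : [s₁, s₀] → ℝ^d satisfy X' = V and V' = E(s, X(s)) with ‖E‖_∞ ≤ M₀ and ‖V(s)‖ ≤ M for all s. If ξ(X(s₀)) = ξ(X(s₁)) = 0 where ξ is C² with ‖∇²ξ‖_∞ ≤ L, then |V(s₁) · ∇ξ(X(s₁))| ≤ (1/2)(L M² + M₀ ‖∇ξ‖_∞)(s₀ - s₁). -/
open Set
set_option maxHeartbeats 1000000

theorem normal_velocity_bound_between_reflections
    (d : ℕ) (s₁ s₀ : ℝ) (hs : s₁ < s₀)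
    (X V : ℝ → EuclideanSpace ℝ (Fin d))
    (E : ℝ → EuclideanSpace ℝ (Fin d) → EuclideanSpace ℝ (Fin d))
    (ξ : EuclideanSpace ℝ (Fin d) → ℝ)
    (M₀ M L G : ℝ)
    (hX : ∀ s ∈ Set.Icc s₁ s₀, HasDerivAt X (V s) s)
    (hV : ∀ s ∈ Set.Icc s₁ s₀, HasDerivAt V (E s (X s)) s)
    (hE : ∀ s x, ‖E s x‖ ≤ M₀)
    (hVbd : ∀ s ∈ Set.Icc s₁ s₀, ‖V s‖ ≤ M)
    (hξ : ContDiff ℝ 2 ξ)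
    (hHess : ∀ z, ‖fderiv ℝ (fun w => gradient ξ w) z‖ ≤ L)
    (hGrad : ∀ z, ‖gradient ξ z‖ ≤ G)
    (hx0 : ξ (X s₀) = 0) (hx1 : ξ (X s₁) = 0) :
    |(inner ℝ (V s₁) (gradient ξ (X s₁)) : ℝ)| ≤
      (1/2) * (L * M^2 + M₀ * G) * (s₀ - s₁) := by
  set C : ℝ := L * M ^ 2 + M₀ * G with hC
  -- gradient ξ is differentiable
  have hfd : ContDiff ℝ 1 (fderiv ℝ ξ) := hξ.fderiv_right (by norm_num)
  have hgd : Differentiable ℝ (fun w => gradient ξ w) := by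
    have : (fun w => gradient ξ w) =
        fun w => (InnerProductSpace.toDual ℝ (EuclideanSpace ℝ (Fin d))).symm (fderiv ℝ ξ w) := rfl
    rw [this]
    exact (InnerProductSpace.toDual ℝ (EuclideanSpace ℝ (Fin d))).symm.toContinuousLinearEquiv.differentiable.comp
      (hfd.differentiable (by norm_num))
  have hξdiff : Differentiable ℝ ξ := hξ.differentiable (by norm_num)
  -- g s = ⟪gradient ξ (X s), V s⟫
  set g : ℝ → ℝ := fun s => (inner ℝ (gradient ξ (X s)) (V s) : ℝ) with hgdef
  -- derivative of s ↦ gradient ξ (X s)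
  have hgradX : ∀ s ∈ Icc s₁ s₀, HasDerivAt (fun t => gradient ξ (X t))
      ((fderiv ℝ (fun w => gradient ξ w) (X s)) (V s)) s := fun s hs' =>
    (hgd (X s)).hasFDerivAt.comp_hasDerivAt s (hX s hs')
  -- derivative of g
  have hg' : ∀ s ∈ Icc s₁ s₀, HasDerivAt g
      ((inner ℝ (gradient ξ (X s)) (E s (X s)) : ℝ) +
        (inner ℝ ((fderiv ℝ (fun w => gradient ξ w) (X s)) (V s)) (V s) : ℝ)) s := fun s hs' =>
    HasDerivAt.inner ℝ (hgradX s hs') (hV s hs')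
  -- bound on g'
  have hMnn : 0 ≤ M := le_trans (norm_nonneg _) (hVbd s₁ ⟨le_rfl, hs.le⟩)
  have hLnn : 0 ≤ L := le_trans (norm_nonneg _) (hHess (X s₁))
  have hbound : ∀ s ∈ Icc s₁ s₀,
      ‖(inner ℝ (gradient ξ (X s)) (E s (X s)) : ℝ) +
        (inner ℝ ((fderiv ℝ (fun w => gradient ξ w) (X s)) (V s)) (V s) : ℝ)‖ ≤ C := by
    intro s hs'
    have h1 : ‖(inner ℝ (gradient ξ (X s)) (E s (X s)) : ℝ)‖ ≤ G * M₀ := by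
      refine le_trans (norm_inner_le_norm _ _) ?_
      exact mul_le_mul (hGrad _) (hE _ _) (norm_nonneg _) (le_trans (norm_nonneg _) (hGrad (X s)))
    have h2 : ‖(inner ℝ ((fderiv ℝ (fun w => gradient ξ w) (X s)) (V s)) (V s) : ℝ)‖
        ≤ (L * M) * M := by
      refine le_trans (norm_inner_le_norm _ _) ?_
      refine mul_le_mul ?_ (hVbd s hs') (norm_nonneg _) (by positivity)
      calc ‖(fderiv ℝ (fun w => gradient ξ w) (X s)) (V s)‖
          ≤ ‖fderiv ℝ (fun w => gradient ξ w) (X s)‖ * ‖V s‖ := ContinuousLinearMap.le_opNorm _ _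
        _ ≤ L * M := mul_le_mul (hHess _) (hVbd s hs') (norm_nonneg _) hLnn
    calc _ ≤ _ := norm_add_le _ _
      _ ≤ G * M₀ + L * M * M := add_le_add h1 h2
      _ = C := by ring
  -- Lipschitz bound: |g s - g s₁| ≤ C * (s - s₁)
  have hgLip : ∀ s ∈ Icc s₁ s₀, ‖g s - g s₁‖ ≤ C * (s - s₁) := by
    intro s hs'
    have := (convex_Icc s₁ s₀).norm_image_sub_le_of_norm_hasDerivWithin_le
      (f := g) (f' := fun s => (inner ℝ (gradient ξ (X s)) (E s (X s)) : ℝ) +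
        (inner ℝ ((fderiv ℝ (fun w => gradient ξ w) (X s)) (V s)) (V s) : ℝ))
      (fun t ht => (hg' t ht).hasDerivWithinAt) hbound
      (⟨le_rfl, hs.le⟩ : s₁ ∈ Icc s₁ s₀) hs'
    calc ‖g s - g s₁‖ ≤ C * ‖s - s₁‖ := this
      _ = C * (s - s₁) := by rw [Real.norm_eq_abs, abs_of_nonneg (by linarith [hs'.1])]
  -- f s = ξ (X s), f' = g
  have hf' : ∀ s ∈ Icc s₁ s₀, HasDerivAt (fun t => ξ (X t)) (g s) s := by
    intro s hs'
    have h1 : HasDerivAt (fun t => ξ (X t)) ((fderiv ℝ ξ (X s)) (V s)) s :=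
      (hξdiff (X s)).hasFDerivAt.comp_hasDerivAt s (hX s hs')
    have h2 : (fderiv ℝ ξ (X s)) (V s) = g s := by
      have := ((hξdiff (X s)).hasGradientAt (𝕜 := ℝ)).hasFDerivAt
      rw [this.fderiv]
      simp [hgdef, InnerProductSpace.toDualMap_apply_apply]
    rwa [h2] at h1
  -- h s = ξ (X s) - g s₁ * (s - s₁)
  set h : ℝ → ℝ := fun s => ξ (X s) - g s₁ * (s - s₁) with hhdef
  have hh' : ∀ s ∈ Icc s₁ s₀, HasDerivAt h (g s - g s₁) s := by
    intro s hs'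
    have : HasDerivAt (fun s : ℝ => g s₁ * (s - s₁)) (g s₁) s := by
      simpa using ((hasDerivAt_id s).sub_const s₁).const_mul (g s₁)
    exact (hf' s hs').sub this
  have key : ∀ x ∈ Icc s₁ s₀, ‖h x‖ ≤ C / 2 * (x - s₁) ^ 2 := by
    refine image_norm_le_of_norm_deriv_right_le_deriv_boundary
      (f := h) (f' := fun s => g s - g s₁)
      (fun t ht => ((hh' t ht).continuousAt).continuousWithinAt)
      (fun t ht => (hh' t (Ico_subset_Icc_self ht)).hasDerivWithinAt)
      (B := fun s => C / 2 * (s - s₁) ^ 2) (B' := fun s => C * (s - s₁)) ?_ ?_ ?_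
    · simp [hhdef, hx1]
    · intro x
      have : HasDerivAt (fun s : ℝ => C / 2 * (s - s₁) ^ 2) (C / 2 * (2 * (x - s₁))) x := by
        have := (((hasDerivAt_id x).sub_const s₁).pow 2).const_mul (C / 2)
        simpa using this
      convert this using 1; ring
    · intro x hx
      exact le_trans (hgLip x (Ico_subset_Icc_self hx)) le_rfl
  have hend := key s₀ ⟨hs.le, le_rfl⟩
  have : ‖h s₀‖ = |g s₁| * (s₀ - s₁) := by
    simp only [hhdef, hx0, zero_sub, norm_neg, Real.norm_eq_abs, abs_mul]
    rw [abs_of_nonneg (by linarith : (0:ℝ) ≤ s₀ - s₁)]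
  rw [this] at hend
  have hiff : |(inner ℝ (V s₁) (gradient ξ (X s₁)) : ℝ)| = |g s₁| := by
    rw [hgdef]; rw [real_inner_comm]
  rw [hiff]
  have hpos : (0:ℝ) < s₀ - s₁ := by linarith
  nlinarith [sq_nonneg (s₀ - s₁), hend]
end
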